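/- Every infinitesimal R-matrix χ of a pre-Cartier quasitriangular bialgebra (H,R,χ) satisfies (Id⊗ε)(χ) = 0 and (ε⊗Id)(χ) = 0. -/

import Mathlib

open scoped TensorProduct

noncomputable section

variable (k H : Type*) [CommRing k] [Ring H] [Bialgebra k H]

/-- leg embedding `a ⊗ b ↦ a ⊗ b ⊗ 1` into `H ⊗ (H ⊗ H)`. -/
def leg12 : H ⊗[k] H →ₐ[k] H ⊗[k] (H ⊗[k] H) :=
  Algebra.TensorProduct.map (AlgHom.id k H) Algebra.TensorProduct.includeLeft

/-- leg embedding `a ⊗ b ↦ 1 ⊗ a ⊗ b`. -/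
def leg23 : H ⊗[k] H →ₐ[k] H ⊗[k] (H ⊗[k] H) :=
  Algebra.TensorProduct.includeRight

/-- leg embedding `a ⊗ b ↦ a ⊗ 1 ⊗ b`. -/
def leg13 : H ⊗[k] H →ₐ[k] H ⊗[k] (H ⊗[k] H) :=
  Algebra.TensorProduct.map (AlgHom.id k H) Algebra.TensorProduct.includeRight

/-- `(Id ⊗ Δ)` as an algebra map `H ⊗ H → H ⊗ (H ⊗ H)`. -/
def idComul : H ⊗[k] H →ₐ[k] H ⊗[k] (H ⊗[k] H) :=
  Algebra.TensorProduct.map (AlgHom.id k H) (Bialgebra.comulAlgHom k H)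

/-- `(Δ ⊗ Id)` as an algebra map `H ⊗ H → H ⊗ (H ⊗ H)` (after reassociation). -/
def comulId : H ⊗[k] H →ₐ[k] H ⊗[k] (H ⊗[k] H) :=
  (Algebra.TensorProduct.assoc k k k H H H).toAlgHom.comp
    (Algebra.TensorProduct.map (Bialgebra.comulAlgHom k H) (AlgHom.id k H))

/-- the flip `a ⊗ b ↦ b ⊗ a` as an algebra map. -/
def swapT : H ⊗[k] H →ₐ[k] H ⊗[k] H := (Algebra.TensorProduct.comm k H H).toAlgHom

/-- A quasitriangular structure on the bialgebra `H`. -/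
structure QT where
  R : H ⊗[k] H
  Rinv : H ⊗[k] H
  mul_inv : R * Rinv = 1
  inv_mul : Rinv * R = 1
  quasi_cocomm : ∀ h : H, swapT k H (Coalgebra.comul (R := k) h) * R = R * Coalgebra.comul (R := k) h
  hex1 : idComul k H R = leg13 k H R * leg12 k H R
  hex2 : comulId k H R = leg13 k H R * leg23 k H R

/-- A pre-Cartier quasitriangular bialgebra structure on `H`. -/
structure PreCartier extends QT k H where
  χ : H ⊗[k] H
  chi_comm : ∀ h : H, χ * Coalgebra.comul (R := k) h = Coalgebra.comul (R := k) h * χ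
  chi_hex1 : idComul k H χ = leg12 k H χ + leg12 k H Rinv * leg13 k H χ * leg12 k H R
  chi_hex2 : comulId k H χ = leg23 k H χ + leg23 k H Rinv * leg13 k H χ * leg23 k H R


/-- `Id ⊗ (Id ⊗ ε)` as an algebra map `H ⊗ (H ⊗ H) → H ⊗ H`. -/
def auxE : H ⊗[k] (H ⊗[k] H) →ₐ[k] H ⊗[k] H :=
  Algebra.TensorProduct.map (AlgHom.id k H)
    ((Algebra.TensorProduct.rid k k H).toAlgHom.comp
      (Algebra.TensorProduct.map (AlgHom.id k H) (Bialgebra.counitAlgHom k H)))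

/-- `ε ⊗ Id ⊗ Id` as an algebra map `H ⊗ (H ⊗ H) → H ⊗ H`. -/
def auxF : H ⊗[k] (H ⊗[k] H) →ₐ[k] H ⊗[k] H :=
  (Algebra.TensorProduct.lid k (H ⊗[k] H)).toAlgHom.comp
    (Algebra.TensorProduct.map (Bialgebra.counitAlgHom k H) (AlgHom.id k (H ⊗[k] H)))

/-- unit ∘ counit as a linear map -/
def auxU : H →ₗ[k] H := (Algebra.linearMap k H) ∘ₗ (Coalgebra.counit (R := k) (A := H))

variable {k H}

lemma auxf_eq (y : H ⊗[k] H) :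
    ((Algebra.TensorProduct.rid k k H).toAlgHom.comp
      (Algebra.TensorProduct.map (AlgHom.id k H) (Bialgebra.counitAlgHom k H))) y
      = (Algebra.TensorProduct.rid k k H)
          (LinearMap.lTensor H (Coalgebra.counit (R := k) (A := H)) y) := by
  induction y using TensorProduct.induction_on with
  | zero => simp
  | tmul c d => simp
  | add x y hx hy =>
      simp only [map_add, AlgHom.coe_comp, AlgEquiv.toAlgHom_eq_coe, AlgHom.coe_coe,
        Function.comp_apply] at hx hy ⊢
      rw [hx, hy]

lemma auxE_idComul (x : H ⊗[k] H) : auxE k H (idComul k H x) = x := by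
  induction x using TensorProduct.induction_on with
  | zero => simp
  | tmul a b =>
      simp only [idComul, auxE, Algebra.TensorProduct.map_tmul, AlgHom.coe_id, id_eq,
        Bialgebra.comulAlgHom_apply, auxf_eq, Coalgebra.lTensor_counit_comul]
      simp
  | add x y hx hy => simp [map_add, hx, hy]

lemma auxE_leg12 (x : H ⊗[k] H) : auxE k H (leg12 k H x) = x := by
  induction x using TensorProduct.induction_on with
  | zero => simp
  | tmul a b => simp [auxE, leg12]
  | add x y hx hy => simp [map_add, hx, hy]

lemma auxE_leg13 (x : H ⊗[k] H) :
    auxE k H (leg13 k H x) = LinearMap.lTensor H (auxU k H) x := by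
  induction x using TensorProduct.induction_on with
  | zero => simp
  | tmul a b => simp [auxE, leg13, auxU, Algebra.algebraMap_eq_smul_one]
  | add x y hx hy => simp [map_add, hx, hy]

lemma auxF_assoc (y : H ⊗[k] H) (b : H) :
    auxF k H ((Algebra.TensorProduct.assoc k k k H H H) (y ⊗ₜ[k] b))
      = (TensorProduct.lid k H)
          (LinearMap.rTensor H (Coalgebra.counit (R := k) (A := H)) y) ⊗ₜ[k] b := by
  induction y using TensorProduct.induction_on with
  | zero => simp
  | tmul c d =>
      simp [auxF, Algebra.TensorProduct.assoc_tmul, TensorProduct.smul_tmul']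
  | add x y hx hy =>
      simp only [TensorProduct.add_tmul, map_add, hx, hy]

lemma auxF_comulId (x : H ⊗[k] H) : auxF k H (comulId k H x) = x := by
  induction x using TensorProduct.induction_on with
  | zero => simp
  | tmul a b =>
      have : comulId k H (a ⊗ₜ[k] b)
          = (Algebra.TensorProduct.assoc k k k H H H)
              ((Coalgebra.comul (R := k) a) ⊗ₜ[k] b) := by
        simp [comulId]
      rw [this, auxF_assoc, Coalgebra.rTensor_counit_comul]
      simp
  | add x y hx hy => simp [map_add, hx, hy]

lemma auxF_leg23 (x : H ⊗[k] H) : auxF k H (leg23 k H x) = x := by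
  induction x using TensorProduct.induction_on with
  | zero => simp
  | tmul a b => simp [auxF, leg23]
  | add x y hx hy => simp [map_add, hx, hy]

lemma auxF_leg13 (x : H ⊗[k] H) :
    auxF k H (leg13 k H x) = LinearMap.rTensor H (auxU k H) x := by
  induction x using TensorProduct.induction_on with
  | zero => simp
  | tmul a b =>
      simp [auxF, leg13, auxU, Algebra.algebraMap_eq_smul_one, TensorProduct.smul_tmul']
  | add x y hx hy => simp [map_add, hx, hy]

lemma counit_comp_auxU :
    (Coalgebra.counit (R := k) (A := H)) ∘ₗ auxU k H
      = (Coalgebra.counit (R := k) (A := H)) := by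
  ext h
  simp [auxU]

variable (k H)

/-- Every infinitesimal `R`-matrix `χ` of a pre-Cartier quasitriangular
bialgebra `(H, R, χ)` satisfies `(Id ⊗ ε)(χ) = 0` and `(ε ⊗ Id)(χ) = 0`. -/
theorem counit_infinitesimal_R_matrix (P : PreCartier k H) :
    LinearMap.lTensor H (Coalgebra.counit (R := k) (A := H)) P.χ = 0 ∧
    LinearMap.rTensor H (Coalgebra.counit (R := k) (A := H)) P.χ = 0 := by
  constructor
  · have h1 := congrArg (auxE k H) P.chi_hex1
    rw [map_add, map_mul, map_mul, auxE_idComul, auxE_leg12, auxE_leg12, auxE_leg12,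
      auxE_leg13] at h1
    have ht : P.Rinv * LinearMap.lTensor H (auxU k H) P.χ * P.R = 0 :=
      left_eq_add.mp h1
    have hX : LinearMap.lTensor H (auxU k H) P.χ = 0 := by
      have : P.R * (P.Rinv * LinearMap.lTensor H (auxU k H) P.χ * P.R) * P.Rinv = 0 := by
        rw [ht, mul_zero, zero_mul]
      calc LinearMap.lTensor H (auxU k H) P.χ
          = P.R * P.Rinv * LinearMap.lTensor H (auxU k H) P.χ * (P.R * P.Rinv) := by
            rw [P.mul_inv, one_mul, mul_one]
        _ = P.R * (P.Rinv * LinearMap.lTensor H (auxU k H) P.χ * P.R) * P.Rinv := by noncomm_ring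
        _ = 0 := this
    have := congrArg (LinearMap.lTensor H (Coalgebra.counit (R := k) (A := H))) hX
    rwa [← LinearMap.lTensor_comp_apply, counit_comp_auxU, map_zero] at this
  · have h2 := congrArg (auxF k H) P.chi_hex2
    rw [map_add, map_mul, map_mul, auxF_comulId, auxF_leg23, auxF_leg23, auxF_leg23,
      auxF_leg13] at h2
    have ht : P.Rinv * LinearMap.rTensor H (auxU k H) P.χ * P.R = 0 :=
      left_eq_add.mp h2
    have hX : LinearMap.rTensor H (auxU k H) P.χ = 0 := by
      have : P.R * (P.Rinv * LinearMap.rTensor H (auxU k H) P.χ * P.R) * P.Rinv = 0 := by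
        rw [ht, mul_zero, zero_mul]
      calc LinearMap.rTensor H (auxU k H) P.χ
          = P.R * P.Rinv * LinearMap.rTensor H (auxU k H) P.χ * (P.R * P.Rinv) := by
            rw [P.mul_inv, one_mul, mul_one]
        _ = P.R * (P.Rinv * LinearMap.rTensor H (auxU k H) P.χ * P.R) * P.Rinv := by noncomm_ring
        _ = 0 := this
    have := congrArg (LinearMap.rTensor H (Coalgebra.counit (R := k) (A := H))) hX
    rwa [← LinearMap.rTensor_comp_apply, counit_comp_auxU, map_zero] at this


end
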